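/- Let U ⊆ ℂ be open, let f : ℂ → ℂ be holomorphic on U, let I ⊆ ℝ be an interval with 0 ∈ I, and let z : ℝ → ℂ be a solution of the Newton flow on I, i.e. for every t ∈ I one has z(t) ∈ U, f′(z(t)) ≠ 0, and z has derivative −f(z(t))/f′(z(t)) at t. If f(z(0)) ≠ 0, then z is injective on I; in particular the Newton flow has no closed orbits through nonequilibrium points. -/

import Mathlib

/-- A solution of the Newton flow through a point where `f` does not vanish
is injective on its interval of definition; in particular there are no closed orbits
through nonequilibrium points. -/
theorem newton_flow_injective
    (U : Set ℂ) (hU : IsOpen U) (f : ℂ → ℂ) (hf : DifferentiableOn ℂ f U)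
    (I : Set ℝ) (hI : I.OrdConnected) (h0 : (0 : ℝ) ∈ I)
    (z : ℝ → ℂ)
    (hz : ∀ t ∈ I, z t ∈ U ∧ deriv f (z t) ≠ 0 ∧
      HasDerivAt z (-(f (z t)) / deriv f (z t)) t)
    (hne : f (z 0) ≠ 0) :
    Set.InjOn z I := by
  set h : ℝ → ℂ := fun t => f (z t) * Complex.exp t with hh
  have hder : ∀ t ∈ I, HasDerivAt h 0 t := by
    intro t ht
    obtain ⟨hU1, hd1, hz1⟩ := hz t ht
    have hfd : HasDerivAt f (deriv f (z t)) (z t) :=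
      (hf.differentiableAt (hU.mem_nhds hU1)).hasDerivAt
    have hcomp : HasDerivAt (fun s => f (z s))
        (deriv f (z t) * (-(f (z t)) / deriv f (z t))) t := hfd.comp t hz1
    have hcomp' : HasDerivAt (fun s => f (z s)) (-(f (z t))) t := by
      convert hcomp using 1
      field_simp
    have hexp : HasDerivAt (fun s : ℝ => Complex.exp s) (Complex.exp t) t :=
      (Complex.hasDerivAt_exp (t : ℂ)).comp_ofReal
    have := hcomp'.mul hexp
    convert this using 1
    · rfl
    · rfl
    · ring
  have hconst : ∀ s ∈ I, ∀ t ∈ I, h s = h t := by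
    intro s hs t ht
    have hc : Convex ℝ I := hI.convex
    have := hc.norm_image_sub_le_of_norm_hasDerivWithin_le
      (fun x hx => (hder x hx).hasDerivWithinAt) (C := 0)
      (fun x hx => by simp) hs ht
    have : ‖h t - h s‖ ≤ 0 := by simpa using this
    have : h t - h s = 0 := norm_le_zero_iff.mp this
    exact (sub_eq_zero.mp this).symm
  intro s hs t ht hst
  have h1 : h s = h 0 := hconst s hs 0 h0
  have h2 : h t = h 0 := hconst t ht 0 h0
  have hfs : f (z s) ≠ 0 := by
    intro h'
    apply hne
    have : h s = 0 := by simp [hh, h']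
    rw [h1] at this
    simpa [hh] using this
  have : f (z s) * Complex.exp s = f (z s) * Complex.exp t := by
    rw [show (f (z s) * Complex.exp t : ℂ) = h t by rw [hh]; simp [hst], h2, ← h1]
  have hexpeq : Complex.exp s = Complex.exp t := mul_left_cancel₀ hfs this
  have : Real.exp s = Real.exp t := by
    have := congrArg (‖·‖) hexpeq
    simpa [Complex.norm_exp] using this
  exact Real.exp_injective this
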